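/- For κ ∈ (0,8), the function r ↦ (ζ(r)+q(r)−2)/(2q(r)), with q(r) = (1+κ/4)r − κr²/8 and ζ(r) = r − κr²/8, attains its maximum on the interval (1, 1/2 + 4/κ) at r* = (−8 + 4√(8+κ))/κ, and the maximal value equals α*(κ) = 1 − κ/(24 + 2κ − 8√(κ+8)). -/

import Mathlib

open Set

private lemma aux_qpos (s r : ℝ) (h2 : 2 < s) (h4 : s < 4) (hC : (0:ℝ) < s ^ 2 - 8)
    (hr : r ∈ Ioo (1:ℝ) (1 / 2 + 4 / (s ^ 2 - 8))) :
    0 < (1 + (s ^ 2 - 8) / 4) * r - (s ^ 2 - 8) * r ^ 2 / 8 := by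
  obtain ⟨h1, hru⟩ := hr

  have hr0 : (0:ℝ) < r := by linarith
  have hκr : (s ^ 2 - 8) * r < (s ^ 2 - 8) / 2 + 4 := by
    have h := mul_lt_mul_of_pos_left hru hC
    have he : (s ^ 2 - 8) * (1 / 2 + 4 / (s ^ 2 - 8)) = (s ^ 2 - 8) / 2 + 4 := by
      field_simp
    linarith [he ▸ h]
  nlinarith [mul_lt_mul_of_pos_left hκr hr0]

private lemma aux_mem (s : ℝ) (h2 : 2 < s) (h4 : s < 4) (hC : (0:ℝ) < s ^ 2 - 8) :
    ((-8 + 4 * s) / (s ^ 2 - 8)) ∈ Ioo (1:ℝ) (1 / 2 + 4 / (s ^ 2 - 8)) := by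

  constructor
  · rw [lt_div_iff₀ hC]; nlinarith
  · rw [div_lt_iff₀ hC]
    have heq : (1 / 2 + 4 / (s ^ 2 - 8)) * (s ^ 2 - 8) = (s ^ 2 - 8) / 2 + 4 := by
      field_simp
    rw [heq]
    nlinarith [mul_pos (show (0:ℝ) < 4 - s by linarith) (show (0:ℝ) < 4 - s by linarith)]

set_option maxHeartbeats 1000000 in
private lemma aux_val (s : ℝ) (h2 : 2 < s) (h4 : s < 4) (hC : (0:ℝ) < s ^ 2 - 8) :
    ((((-8 + 4 * s) / (s ^ 2 - 8)) - (s ^ 2 - 8) * ((-8 + 4 * s) / (s ^ 2 - 8)) ^ 2 / 8) +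
        ((1 + (s ^ 2 - 8) / 4) * ((-8 + 4 * s) / (s ^ 2 - 8)) -
          (s ^ 2 - 8) * ((-8 + 4 * s) / (s ^ 2 - 8)) ^ 2 / 8) - 2) /
      (2 * ((1 + (s ^ 2 - 8) / 4) * ((-8 + 4 * s) / (s ^ 2 - 8)) -
          (s ^ 2 - 8) * ((-8 + 4 * s) / (s ^ 2 - 8)) ^ 2 / 8)) =
    1 - (s ^ 2 - 8) / (24 + 2 * (s ^ 2 - 8) - 8 * s) := by

  have hCne : (s ^ 2 - 8) ≠ 0 := ne_of_gt hC
  have hqR := aux_qpos s _ h2 h4 hC (aux_mem s h2 h4 hC)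
  have hden : 24 + 2 * (s ^ 2 - 8) - 8 * s = 2 * (s - 2) ^ 2 := by ring
  have hdne : (2 * (s - 2) ^ 2) ≠ 0 := ne_of_gt (by nlinarith)
  rw [hden, div_eq_iff (ne_of_gt (by linarith : (0:ℝ) < 2 * ((1 + (s ^ 2 - 8) / 4) * ((-8 + 4 * s) / (s ^ 2 - 8)) - (s ^ 2 - 8) * ((-8 + 4 * s) / (s ^ 2 - 8)) ^ 2 / 8)))]
  have hs2ne : s - 2 ≠ 0 := ne_of_gt (by linarith)
  field_simp
  ring

set_option maxHeartbeats 1000000 in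
private lemma aux_ineq (s r : ℝ) (h2 : 2 < s) (h4 : s < 4) (hC : (0:ℝ) < s ^ 2 - 8)
    (hr : r ∈ Ioo (1:ℝ) (1 / 2 + 4 / (s ^ 2 - 8))) :
    ((r - (s ^ 2 - 8) * r ^ 2 / 8) + ((1 + (s ^ 2 - 8) / 4) * r - (s ^ 2 - 8) * r ^ 2 / 8) - 2) /
        (2 * ((1 + (s ^ 2 - 8) / 4) * r - (s ^ 2 - 8) * r ^ 2 / 8)) ≤
      1 - (s ^ 2 - 8) / (24 + 2 * (s ^ 2 - 8) - 8 * s) := by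
  have hq := aux_qpos s r h2 h4 hC hr
  have hden : 24 + 2 * (s ^ 2 - 8) - 8 * s = 2 * (s - 2) ^ 2 := by ring
  have hd2 : (0:ℝ) < (s - 2) ^ 2 := by nlinarith
  rw [hden, div_le_iff₀ (by linarith :
    (0:ℝ) < 2 * ((1 + (s ^ 2 - 8) / 4) * r - (s ^ 2 - 8) * r ^ 2 / 8))]
  have he : (1 - (s ^ 2 - 8) / (2 * (s - 2) ^ 2)) *
      (2 * ((1 + (s ^ 2 - 8) / 4) * r - (s ^ 2 - 8) * r ^ 2 / 8)) =
      2 * ((1 + (s ^ 2 - 8) / 4) * r - (s ^ 2 - 8) * r ^ 2 / 8) -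
        (s ^ 2 - 8) * ((1 + (s ^ 2 - 8) / 4) * r - (s ^ 2 - 8) * r ^ 2 / 8) / (s - 2) ^ 2 := by
    field_simp
  rw [he]
  have hdiv : (s ^ 2 - 8) * ((1 + (s ^ 2 - 8) / 4) * r - (s ^ 2 - 8) * r ^ 2 / 8) / (s - 2) ^ 2 ≤
      (s ^ 2 - 8) * r / 4 + 2 := by
    rw [div_le_iff₀ hd2]
    nlinarith [sq_nonneg ((s ^ 2 - 8) * r - 4 * s + 8)]
  nlinarith [hdiv]

/-- Optimisation of the SLE Hölder exponent: the function
`r ↦ (ζ(r)+q(r)−2)/(2q(r))` attains its maximum over `(1, 1/2+4/κ)` at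
`r* = (−8+4√(8+κ))/κ`, with maximal value `α*(κ) = 1 − κ/(24+2κ−8√(κ+8))`. -/
theorem sle_exponent_optimisation (κ : ℝ) (hκ : κ ∈ Ioo (0:ℝ) 8) :
    ((-8 + 4 * Real.sqrt (8 + κ)) / κ) ∈ Ioo (1:ℝ) (1 / 2 + 4 / κ) ∧
    (∀ r ∈ Ioo (1:ℝ) (1 / 2 + 4 / κ),
      ((r - κ * r ^ 2 / 8) + ((1 + κ / 4) * r - κ * r ^ 2 / 8) - 2) /
          (2 * ((1 + κ / 4) * r - κ * r ^ 2 / 8)) ≤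
        (let r' := (-8 + 4 * Real.sqrt (8 + κ)) / κ;
          ((r' - κ * r' ^ 2 / 8) + ((1 + κ / 4) * r' - κ * r' ^ 2 / 8) - 2) /
            (2 * ((1 + κ / 4) * r' - κ * r' ^ 2 / 8)))) ∧
    (let r' := (-8 + 4 * Real.sqrt (8 + κ)) / κ;
      ((r' - κ * r' ^ 2 / 8) + ((1 + κ / 4) * r' - κ * r' ^ 2 / 8) - 2) /
          (2 * ((1 + κ / 4) * r' - κ * r' ^ 2 / 8)) =
        1 - κ / (24 + 2 * κ - 8 * Real.sqrt (κ + 8))) := by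
  obtain ⟨hκ0, hκ8⟩ := hκ
  have h8 : (0:ℝ) ≤ 8 + κ := by linarith
  obtain ⟨s, hs0, hs2, hsq1, hsq2⟩ :
      ∃ s : ℝ, 0 ≤ s ∧ s ^ 2 = 8 + κ ∧ Real.sqrt (8 + κ) = s ∧ Real.sqrt (κ + 8) = s :=
    ⟨Real.sqrt (8 + κ), Real.sqrt_nonneg _, Real.sq_sqrt h8, rfl, by rw [add_comm]⟩
  rw [hsq1, hsq2]
  have h2 : 2 < s := by nlinarith
  have h4 : s < 4 := by nlinarith
  have hκs : κ = s ^ 2 - 8 := by linarith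
  subst hκs
  exact ⟨aux_mem s h2 h4 hκ0,
    fun r hr => le_of_le_of_eq (aux_ineq s r h2 h4 hκ0 hr) (aux_val s h2 h4 hκ0).symm,
    aux_val s h2 h4 hκ0⟩
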